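/- Let 𝕂 be ℝ or ℂ, let X and Y be locally compact Hausdorff spaces, and let μ_X and μ_Y be fully supported regular Borel measures on X and Y respectively. Suppose T : C_c(X,𝕂) → C_c(Y,𝕂) is a linear bijection which is isometric for the L¹-norms: ∫_Y |Tf| dμ_Y = ∫_X |f| dμ_X for all f ∈ C_c(X,𝕂). Then there exist a homeomorphism φ : Y → X and a continuous nowhere-zero function P : Y → 𝕂 such that Tf(y) = P(y)·f(φ(y)) for all f ∈ C_c(X,𝕂) and y ∈ Y, and moreover |P ∘ φ⁻¹| is a continuous density of μ_X with respect to the pushforward measure φ_*μ_Y, in the sense that ∫_X |P(φ⁻¹(x))|·|f(x)| d(φ_*μ_Y)(x) = ∫_X |f(x)| dμ_X(x) for all f ∈ C_c(X,𝕂). -/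

import Mathlib

open Set Topology MeasureTheory

lemma sc_inner {𝕜 : Type*} [RCLike 𝕜] (a b : 𝕜) (h : ‖a + b‖ = ‖a‖ + ‖b‖) :
    RCLike.re a * RCLike.re b + RCLike.im a * RCLike.im b = ‖a‖ * ‖b‖ := by
  have ea : ‖a‖ ^ 2 = RCLike.re a * RCLike.re a + RCLike.im a * RCLike.im a :=
    RCLike.norm_sq_eq_def
  have eb : ‖b‖ ^ 2 = RCLike.re b * RCLike.re b + RCLike.im b * RCLike.im b :=
    RCLike.norm_sq_eq_def
  have eab : ‖a + b‖ ^ 2 = RCLike.re (a+b) * RCLike.re (a+b) + RCLike.im (a+b) * RCLike.im (a+b) :=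
    RCLike.norm_sq_eq_def
  rw [h] at eab
  simp only [map_add] at eab
  nlinarith [eab, ea, eb]

lemma sc_disj {𝕜 : Type*} [RCLike 𝕜] (a b : 𝕜)
    (h : ‖a + b‖ + ‖a - b‖ = 2 * ‖a‖ + 2 * ‖b‖) : a = 0 ∨ b = 0 := by
  have t1 : ‖a + b‖ ≤ ‖a‖ + ‖b‖ := norm_add_le a b
  have t2 : ‖a - b‖ ≤ ‖a‖ + ‖b‖ := norm_sub_le a b
  have e1 : ‖a + b‖ = ‖a‖ + ‖b‖ := by linarith
  have e2 : ‖a + -b‖ = ‖a‖ + ‖-b‖ := by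
    rw [← sub_eq_add_neg, norm_neg]; linarith
  have s1 := sc_inner a b e1
  have s2 := sc_inner a (-b) e2
  simp only [map_neg, norm_neg, mul_neg] at s2
  have : ‖a‖ * ‖b‖ = 0 := by linarith
  rcases mul_eq_zero.mp this with h' | h'
  · exact Or.inl (norm_eq_zero.mp h')
  · exact Or.inr (norm_eq_zero.mp h')

lemma sc_mono {𝕜 : Type*} [RCLike 𝕜] (a b : 𝕜) (h : ‖a + b‖ = ‖a‖ + ‖b‖) :
    ‖a - b‖ ≤ ‖a + b‖ := by
  have s1 := sc_inner a b h
  have eab : ‖a - b‖ ^ 2 = RCLike.re (a-b) * RCLike.re (a-b) + RCLike.im (a-b) * RCLike.im (a-b) :=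
    RCLike.norm_sq_eq_def
  simp only [map_sub] at eab
  have ea : ‖a‖ ^ 2 = RCLike.re a * RCLike.re a + RCLike.im a * RCLike.im a :=
    RCLike.norm_sq_eq_def
  have eb : ‖b‖ ^ 2 = RCLike.re b * RCLike.re b + RCLike.im b * RCLike.im b :=
    RCLike.norm_sq_eq_def
  have h2 : ‖a - b‖ ^ 2 = (‖a‖ - ‖b‖) ^ 2 := by nlinarith
  have hn1 : (0:ℝ) ≤ ‖a - b‖ := norm_nonneg _
  have hn2 : (0:ℝ) ≤ ‖a‖ := norm_nonneg _
  have hn3 : (0:ℝ) ≤ ‖b‖ := norm_nonneg _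
  nlinarith [h2, hn1, hn2, hn3]

lemma sc_normI {𝕜 : Type*} [RCLike 𝕜] : ‖(RCLike.I : 𝕜)‖ ≤ 1 := by
  rcases RCLike.I_mul_I (K := 𝕜) with h | h
  · simp [h]
  · have := congrArg norm h
    rw [norm_mul, norm_neg, norm_one] at this
    nlinarith [norm_nonneg (RCLike.I : 𝕜)]

section
variable {𝕜 X Y : Type*} [RCLike 𝕜]
    [TopologicalSpace X] [LocallyCompactSpace X] [T2Space X]
    [MeasurableSpace X] [BorelSpace X]
    [TopologicalSpace Y] [LocallyCompactSpace Y] [T2Space Y]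
    [MeasurableSpace Y] [BorelSpace Y]

/-- The real-to-𝕜 coercion of a continuous real map. -/
noncomputable def oR (p : C(X, ℝ)) : C(X, 𝕜) :=
  ⟨fun x => ((p x : ℝ) : 𝕜), RCLike.continuous_ofReal.comp p.continuous⟩

lemma oR_apply (p : C(X, ℝ)) (x : X) : (oR (𝕜 := 𝕜) p) x = ((p x : ℝ) : 𝕜) := rfl

lemma oR_cs {p : C(X, ℝ)} (hp : HasCompactSupport ⇑p) :
    HasCompactSupport ⇑(oR (𝕜 := 𝕜) p) := by
  have : ⇑(oR (𝕜 := 𝕜) p) = (fun r : ℝ => ((r : ℝ) : 𝕜)) ∘ ⇑p := rfl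
  rw [this]
  exact hp.comp_left (by simp)


lemma ury {Z : Type*} [TopologicalSpace Z] [LocallyCompactSpace Z] [T2Space Z]
    (𝕜 : Type*) [RCLike 𝕜] {K U : Set Z} (hK : IsCompact K) (hU : IsOpen U) (hKU : K ⊆ U) :
    ∃ u : C(Z, 𝕜), HasCompactSupport ⇑u ∧ Set.EqOn ⇑u 1 K ∧ tsupport ⇑u ⊆ U ∧
      ∀ z, ∃ r : ℝ, 0 ≤ r ∧ r ≤ 1 ∧ u z = ((r : ℝ) : 𝕜) := by
  obtain ⟨L, hL, hKL, hLU⟩ := exists_compact_between hK hU hKU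
  obtain ⟨u₀, h1, h0, hcs, hmem⟩ := exists_continuous_one_zero_of_isCompact hK
    (isOpen_interior.isClosed_compl)
    (disjoint_compl_right.mono_left hKL)
  refine ⟨⟨fun z => ((u₀ z : ℝ) : 𝕜), RCLike.continuous_ofReal.comp u₀.continuous⟩,
    ?_, ?_, ?_, ?_⟩
  · have : (⇑(⟨fun z => ((u₀ z : ℝ) : 𝕜), RCLike.continuous_ofReal.comp u₀.continuous⟩
        : C(Z, 𝕜))) = (fun r : ℝ => ((r : ℝ) : 𝕜)) ∘ ⇑u₀ := rfl
    rw [this]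
    exact hcs.comp_left (by simp)
  · intro z hz
    simp only [ContinuousMap.coe_mk]
    rw [h1 hz]
    simp
  · have hsup : Function.support (fun z => ((u₀ z : ℝ) : 𝕜)) ⊆ interior L := by
      intro z hz
      by_contra hzL
      have : u₀ z = 0 := h0 hzL
      simp [Function.mem_support, this] at hz
    have : tsupport (fun z => ((u₀ z : ℝ) : 𝕜)) ⊆ L := by
      refine closure_minimal (hsup.trans interior_subset) hL.isClosed
    exact fun z hz => hLU (this hz)
  · intro z
    exact ⟨u₀ z, (hmem z).1, (hmem z).2, rfl⟩

set_option maxHeartbeats 2000000 in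
theorem core_thm
    (μX : Measure X) (μY : Measure Y) [μX.Regular] [μY.Regular]
    (hYfull : ∀ U : Set Y, IsOpen U → U.Nonempty → 0 < μY U)
    (T : C(X, 𝕜) → C(Y, 𝕜))
    (hTbij : Set.BijOn T {f | HasCompactSupport ⇑f} {g | HasCompactSupport ⇑g})
    (hTadd : ∀ f g : C(X, 𝕜), HasCompactSupport ⇑f → HasCompactSupport ⇑g →
      T (f + g) = T f + T g)
    (hTsmul : ∀ (c : 𝕜), ∀ f : C(X, 𝕜), HasCompactSupport ⇑f → T (c • f) = c • T f)
    (hTiso : ∀ f : C(X, 𝕜), HasCompactSupport ⇑f →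
      ∫ y, ‖T f y‖ ∂μY = ∫ x, ‖f x‖ ∂μX) :
    ∃ (φ : Y → X) (P : Y → 𝕜), Continuous φ ∧ Continuous P ∧ (∀ y, P y ≠ 0) ∧
      (∀ f : C(X, 𝕜), HasCompactSupport ⇑f → ∀ y, T f y = P y * f (φ y)) := by
  classical
  haveI : μY.IsOpenPosMeasure := ⟨fun U hU hne => (hYfull U hU hne).ne'⟩
  -- basic compact-support helpers
  have hcs0 : HasCompactSupport (⇑(0 : C(X, 𝕜))) := by
    rw [ContinuousMap.coe_zero]; exact HasCompactSupport.zero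
  have hcsAdd : ∀ a b : C(X, 𝕜), HasCompactSupport ⇑a → HasCompactSupport ⇑b →
      HasCompactSupport ⇑(a + b) := by
    intro a b ha hb; rw [ContinuousMap.coe_add]; exact ha.add hb
  have hcsNeg : ∀ a : C(X, 𝕜), HasCompactSupport ⇑a → HasCompactSupport ⇑(-a) := by
    intro a ha
    apply ha.mono
    intro x hx
    simp only [Function.mem_support, ContinuousMap.coe_neg, Pi.neg_apply, ne_eq,
      neg_eq_zero] at hx ⊢
    exact hx
  have hcsSub : ∀ a b : C(X, 𝕜), HasCompactSupport ⇑a → HasCompactSupport ⇑b →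
      HasCompactSupport ⇑(a - b) := by
    intro a b ha hb; rw [sub_eq_add_neg]; exact hcsAdd _ _ ha (hcsNeg _ hb)
  have hcsSmul : ∀ (c : 𝕜) (a : C(X, 𝕜)), HasCompactSupport ⇑a →
      HasCompactSupport ⇑(c • a) := by
    intro c a ha
    apply ha.mono
    intro x hx
    simp only [Function.mem_support, ContinuousMap.coe_smul, Pi.smul_apply,
      smul_eq_mul] at hx ⊢
    exact fun h => hx (by rw [h, mul_zero])
  have hcsMul : ∀ a b : C(X, 𝕜), HasCompactSupport ⇑b → HasCompactSupport ⇑(a * b) := by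
    intro a b hb
    apply hb.mono
    intro x hx
    simp only [Function.mem_support, ContinuousMap.coe_mul, Pi.mul_apply] at hx ⊢
    exact fun h => hx (by rw [h, mul_zero])
  -- linearity helpers
  have hT0 : T 0 = 0 := by
    have h := hTadd 0 0 hcs0 hcs0
    rw [add_zero] at h
    exact (add_eq_right.mp h.symm)
  have hTsub : ∀ f g : C(X, 𝕜), HasCompactSupport ⇑f → HasCompactSupport ⇑g →
      T (f - g) = T f - T g := by
    intro f g hf hg
    have e1 : ((-1 : 𝕜) • g) = -g := by ext x; simp
    have hneg : T (-g) = -T g := by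
      have h := hTsmul (-1) g hg
      rw [e1] at h
      rw [h]; ext y; simp
    rw [sub_eq_add_neg, hTadd f (-g) hf (hcsNeg _ hg), hneg, sub_eq_add_neg]
  have hTsum : ∀ {n : ℕ} (h : Fin n → C(X, 𝕜)), (∀ i, HasCompactSupport ⇑(h i)) →
      T (∑ i, h i) = ∑ i, T (h i) := by
    intro n
    induction n with
    | zero => intro h _; simpa using hT0
    | succ m ih =>
      intro h hh
      rw [Fin.sum_univ_castSucc, Fin.sum_univ_castSucc (f := fun i => T (h i))]
      have hcs' : HasCompactSupport ⇑(∑ i : Fin m, h i.castSucc) := by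
        have : ∀ (s : Finset (Fin m)), HasCompactSupport ⇑(∑ i ∈ s, h i.castSucc) := by
          intro s
          induction s using Finset.cons_induction with
          | empty => simpa using hcs0
          | cons j s hj ihs =>
            rw [Finset.sum_cons]
            exact hcsAdd _ _ (hh _) ihs
        exact this _
      rw [hTadd _ _ hcs' (hh _), ih (fun i => h i.castSucc) (fun i => hh _)]
  have hcsSum : ∀ {n : ℕ} (h : Fin n → C(X, 𝕜)), (∀ i, HasCompactSupport ⇑(h i)) →
      HasCompactSupport ⇑(∑ i, h i) := by
    intro n h hh
    have : ∀ (s : Finset (Fin n)), HasCompactSupport ⇑(∑ i ∈ s, h i) := by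
      intro s
      induction s using Finset.cons_induction with
      | empty => simpa using hcs0
      | cons j s hj ihs =>
        rw [Finset.sum_cons]
        exact hcsAdd _ _ (hh _) ihs
    exact this _
  -- integrability
  have hintY : ∀ g : C(Y, 𝕜), HasCompactSupport ⇑g → Integrable (fun y => ‖g y‖) μY := by
    intro g hg
    exact (g.continuous.norm).integrable_of_hasCompactSupport hg.norm
  have hintX : ∀ f : C(X, 𝕜), HasCompactSupport ⇑f → Integrable (fun x => ‖f x‖) μX := by
    intro f hf
    exact (f.continuous.norm).integrable_of_hasCompactSupport hf.norm
  -- norms of real values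
  have hnormR : ∀ r : ℝ, 0 ≤ r → ‖((r : ℝ) : 𝕜)‖ = r := by
    intro r hr; rw [RCLike.norm_ofReal, abs_of_nonneg hr]
  -- a nonnegative continuous compactly supported function with zero integral vanishes
  have hzero : ∀ N : Y → ℝ, Continuous N → HasCompactSupport N → (∀ y, 0 ≤ N y) →
      ∫ y, N y ∂μY = 0 → ∀ y, N y = 0 := by
    intro N hNc hNcs hNnn hNI y
    have hInt : Integrable N μY := hNc.integrable_of_hasCompactSupport hNcs
    have hae : N =ᵐ[μY] 0 := (integral_eq_zero_iff_of_nonneg (fun y => hNnn y) hInt).mp hNI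
    have : N = fun _ => (0:ℝ) := (hNc.ae_eq_iff_eq μY continuous_const).mp hae
    exact congrFun this y
  -- key disjointness preservation
  have hdisj : ∀ f g : C(X, 𝕜), HasCompactSupport ⇑f → HasCompactSupport ⇑g →
      (∀ x, f x = 0 ∨ g x = 0) → ∀ y, T f y = 0 ∨ T g y = 0 := by
    intro f g hf hg hfg y
    have hTf : HasCompactSupport ⇑(T f) := hTbij.mapsTo hf
    have hTg : HasCompactSupport ⇑(T g) := hTbij.mapsTo hg
    have hABadd : T (f + g) = T f + T g := hTadd f g hf hg
    have hABsub : T (f - g) = T f - T g := hTsub f g hf hg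
    set N : Y → ℝ := fun y => 2 * ‖T f y‖ + 2 * ‖T g y‖ - ‖T f y + T g y‖ - ‖T f y - T g y‖
      with hNdef
    have hNnn : ∀ y, 0 ≤ N y := by
      intro y
      have t1 := norm_add_le (T f y) (T g y)
      have t2 := norm_sub_le (T f y) (T g y)
      simp only [hNdef]
      linarith
    have hNc : Continuous N := by
      have c1 := (T f).continuous
      have c2 := (T g).continuous
      fun_prop
    have hNcs : HasCompactSupport N := by
      apply HasCompactSupport.intro (hTf.isCompact.union hTg.isCompact)
      intro y hy
      have h1 : T f y = 0 := image_eq_zero_of_notMem_tsupport (fun h => hy (Or.inl h))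
      have h2 : T g y = 0 := image_eq_zero_of_notMem_tsupport (fun h => hy (Or.inr h))
      simp [hNdef, h1, h2]
    have I1 : Integrable (fun y => ‖T f y‖) μY := hintY _ hTf
    have I2 : Integrable (fun y => ‖T g y‖) μY := hintY _ hTg
    have I3 : Integrable (fun y => ‖T f y + T g y‖) μY := by
      have := hintY _ (hTbij.mapsTo (hcsAdd f g hf hg))
      have he : (fun y => ‖T f y + T g y‖) = fun y => ‖T (f + g) y‖ := by
        funext y; rw [hABadd]; simp
      rw [he]; exact this
    have I4 : Integrable (fun y => ‖T f y - T g y‖) μY := by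
      have := hintY _ (hTbij.mapsTo (hcsSub f g hf hg))
      have he : (fun y => ‖T f y - T g y‖) = fun y => ‖T (f - g) y‖ := by
        funext y; rw [hABsub]; simp
      rw [he]; exact this
    have hNI : ∫ y, N y ∂μY = 0 := by
      have I12 : Integrable (fun y => 2 * ‖T f y‖ + 2 * ‖T g y‖) μY := by
        exact (I1.const_mul 2).add (I2.const_mul 2)
      have I123 : Integrable (fun y => 2 * ‖T f y‖ + 2 * ‖T g y‖ - ‖T f y + T g y‖) μY := by
        exact I12.sub I3
      have e0 : ∫ y, N y ∂μY = (2 * ∫ y, ‖T f y‖ ∂μY + 2 * ∫ y, ‖T g y‖ ∂μY)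
          - (∫ y, ‖T f y + T g y‖ ∂μY) - ∫ y, ‖T f y - T g y‖ ∂μY := by
        simp only [hNdef]
        rw [integral_sub I123 I4, integral_sub I12 I3,
          integral_add (I1.const_mul 2) (I2.const_mul 2),
          integral_const_mul, integral_const_mul]
      have eA : ∫ y, ‖T f y + T g y‖ ∂μY = ∫ x, ‖f x + g x‖ ∂μX := by
        have he : (fun y => ‖T f y + T g y‖) = fun y => ‖T (f + g) y‖ := by
          funext y; rw [hABadd]; simp
        rw [he, hTiso (f + g) (hcsAdd f g hf hg)]
        simp
      have eB : ∫ y, ‖T f y - T g y‖ ∂μY = ∫ x, ‖f x - g x‖ ∂μX := by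
        have he : (fun y => ‖T f y - T g y‖) = fun y => ‖T (f - g) y‖ := by
          funext y; rw [hABsub]; simp
        rw [he, hTiso (f - g) (hcsSub f g hf hg)]
        simp
      have eplus : ∫ x, ‖f x + g x‖ ∂μX = ∫ x, ‖f x‖ ∂μX + ∫ x, ‖g x‖ ∂μX := by
        rw [← integral_add (hintX f hf) (hintX g hg)]
        congr 1; funext x
        rcases hfg x with h | h <;> simp [h]
      have eminus : ∫ x, ‖f x - g x‖ ∂μX = ∫ x, ‖f x‖ ∂μX + ∫ x, ‖g x‖ ∂μX := by
        rw [← integral_add (hintX f hf) (hintX g hg)]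
        congr 1; funext x
        rcases hfg x with h | h <;> simp [h]
      rw [e0, hTiso f hf, hTiso g hg, eA, eB, eplus, eminus]
      ring
    have hy := hzero N hNc hNcs hNnn hNI y
    simp only [hNdef] at hy
    exact sc_disj _ _ (by linarith)
  -- domination
  have hdom : ∀ u g : C(X, 𝕜), HasCompactSupport ⇑u → HasCompactSupport ⇑g →
      (∀ x, ∃ r s : ℝ, 0 ≤ s ∧ s ≤ r ∧ u x = ((r:ℝ):𝕜) ∧ g x = ((s:ℝ):𝕜)) →
      ∀ y, ‖T g y‖ ≤ ‖T u y‖ := by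
    intro u g hu hg hug y
    have hTu : HasCompactSupport ⇑(T u) := hTbij.mapsTo hu
    have hTg : HasCompactSupport ⇑(T g) := hTbij.mapsTo hg
    have hA : T (u + g) = T u + T g := hTadd u g hu hg
    have hB : T (u - g) = T u - T g := hTsub u g hu hg
    set N : Y → ℝ := fun y => ‖T u y + T g y‖ + ‖T u y - T g y‖ - 2 * ‖T u y‖ with hNdef
    have hNnn : ∀ y, 0 ≤ N y := by
      intro y
      have t1 : 2 * ‖T u y‖ = ‖(T u y + T g y) + (T u y - T g y)‖ := by
        rw [show (T u y + T g y) + (T u y - T g y) = 2 * T u y by ring]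
        rw [norm_mul, RCLike.norm_two]
      have t2 := norm_add_le (T u y + T g y) (T u y - T g y)
      simp only [hNdef]
      linarith
    have hNc : Continuous N := by
      have c1 := (T u).continuous
      have c2 := (T g).continuous
      fun_prop
    have hNcs : HasCompactSupport N := by
      apply HasCompactSupport.intro (hTu.isCompact.union hTg.isCompact)
      intro y hy
      have h1 : T u y = 0 := image_eq_zero_of_notMem_tsupport (fun h => hy (Or.inl h))
      have h2 : T g y = 0 := image_eq_zero_of_notMem_tsupport (fun h => hy (Or.inr h))
      simp [hNdef, h1, h2]
    have I3 : Integrable (fun y => ‖T u y + T g y‖) μY := by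
      have := hintY _ (hTbij.mapsTo (hcsAdd u g hu hg))
      have he : (fun y => ‖T u y + T g y‖) = fun y => ‖T (u + g) y‖ := by
        funext y; rw [hA]; simp
      rw [he]; exact this
    have I4 : Integrable (fun y => ‖T u y - T g y‖) μY := by
      have := hintY _ (hTbij.mapsTo (hcsSub u g hu hg))
      have he : (fun y => ‖T u y - T g y‖) = fun y => ‖T (u - g) y‖ := by
        funext y; rw [hB]; simp
      rw [he]; exact this
    have I1 : Integrable (fun y => ‖T u y‖) μY := hintY _ hTu
    have hNI : ∫ y, N y ∂μY = 0 := by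
      have I34 : Integrable (fun y => ‖T u y + T g y‖ + ‖T u y - T g y‖) μY := by
        exact I3.add I4
      have e0 : ∫ y, N y ∂μY = ((∫ y, ‖T u y + T g y‖ ∂μY) + ∫ y, ‖T u y - T g y‖ ∂μY)
          - 2 * ∫ y, ‖T u y‖ ∂μY := by
        simp only [hNdef]
        rw [integral_sub I34 (I1.const_mul 2), integral_add I3 I4, integral_const_mul]
      have eA : ∫ y, ‖T u y + T g y‖ ∂μY = ∫ x, ‖u x + g x‖ ∂μX := by
        have he : (fun y => ‖T u y + T g y‖) = fun y => ‖T (u + g) y‖ := by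
          funext y; rw [hA]; simp
        rw [he, hTiso (u + g) (hcsAdd u g hu hg)]; simp
      have eB : ∫ y, ‖T u y - T g y‖ ∂μY = ∫ x, ‖u x - g x‖ ∂μX := by
        have he : (fun y => ‖T u y - T g y‖) = fun y => ‖T (u - g) y‖ := by
          funext y; rw [hB]; simp
        rw [he, hTiso (u - g) (hcsSub u g hu hg)]; simp
      have eplus : ∫ x, ‖u x + g x‖ ∂μX = ∫ x, ‖u x‖ ∂μX + ∫ x, ‖g x‖ ∂μX := by
        rw [← integral_add (hintX u hu) (hintX g hg)]
        congr 1; funext x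
        obtain ⟨r, s, hs0, hsr, hur, hgs⟩ := hug x
        rw [hur, hgs, ← RCLike.ofReal_add, hnormR _ (by linarith), hnormR _ (by linarith),
          hnormR _ hs0]
      have eminus : ∫ x, ‖u x - g x‖ ∂μX = ∫ x, ‖u x‖ ∂μX - ∫ x, ‖g x‖ ∂μX := by
        rw [← integral_sub (hintX u hu) (hintX g hg)]
        congr 1; funext x
        obtain ⟨r, s, hs0, hsr, hur, hgs⟩ := hug x
        rw [hur, hgs, ← RCLike.ofReal_sub, hnormR _ (by linarith), hnormR _ (by linarith),
          hnormR _ hs0]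
      rw [e0, eA, eB, eplus, eminus, ← hTiso u hu]
      ring
    have hy := hzero N hNc hNcs hNnn hNI y
    simp only [hNdef] at hy
    have key : ‖(T u y + T g y) + (T u y - T g y)‖
        = ‖T u y + T g y‖ + ‖T u y - T g y‖ := by
      rw [show (T u y + T g y) + (T u y - T g y) = 2 * T u y by ring,
        norm_mul, RCLike.norm_two]
      linarith
    have hmono := sc_mono _ _ key
    rw [show (T u y + T g y) - (T u y - T g y) = 2 * T g y by ring,
      show (T u y + T g y) + (T u y - T g y) = 2 * T u y by ring,
      norm_mul, norm_mul, RCLike.norm_two] at hmono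
    linarith

  -- partition-of-unity vanishing principle
  have PART : ∀ (f : C(X, 𝕜)), HasCompactSupport ⇑f → ∀ y : Y,
      (∀ z ∈ tsupport ⇑f, ∃ U : Set X, z ∈ U ∧ IsOpen U ∧
        ∀ h : C(X, 𝕜), HasCompactSupport ⇑h → tsupport ⇑h ⊆ U → T h y = 0) →
      T f y = 0 := by
    intro f hf y hyp
    choose U hzU hUopen hU using hyp
    obtain ⟨t, ht⟩ := hf.elim_nhds_subcover' (fun z hz => U z hz)
      (fun z hz => (hUopen z hz).mem_nhds (hzU z hz))
    set n := t.card with hn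
    let e := t.equivFin
    let W : ↥(tsupport ⇑f) → Set X := fun p => U p.1 p.2
    let s' : Fin n → Set X := fun i => W (e.symm i).1
    have hs'open : ∀ i, IsOpen (s' i) := fun i => hUopen _ _
    have hcov : tsupport ⇑f ⊆ ⋃ i, s' i := by
      intro z hz
      have := ht hz
      simp only [Set.mem_iUnion] at this ⊢
      obtain ⟨x, hxt, hz'⟩ := this
      refine ⟨e ⟨x, hxt⟩, ?_⟩
      show z ∈ W (e.symm (e ⟨x, hxt⟩)).1
      have he : e.symm (e ⟨x, hxt⟩) = ⟨x, hxt⟩ := Equiv.symm_apply_apply _ _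
      rw [he]
      exact hz'
    obtain ⟨χ, hχsupp, hχsum, hχmem, hχcs⟩ :=
      exists_continuous_sum_one_of_isOpen_isCompact hs'open hf hcov
    have hcsoR : ∀ i, HasCompactSupport ⇑(oR (𝕜 := 𝕜) (χ i)) := fun i => oR_cs (hχcs i)
    have key : f = ∑ i, f * oR (χ i) := by
      ext x
      rw [ContinuousMap.coe_sum, Finset.sum_apply]
      by_cases hx : x ∈ tsupport ⇑f
      · have h1 : ∑ i, χ i x = 1 := by
          have := hχsum hx
          simpa using this
        have : ∀ i ∈ Finset.univ, (f * oR (𝕜 := 𝕜) (χ i)) x = f x * ((χ i x : ℝ) : 𝕜) :=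
          fun i _ => rfl
        rw [Finset.sum_congr rfl this, ← Finset.mul_sum, ← RCLike.ofReal_sum, h1]
        simp
      · have h0 : f x = 0 := image_eq_zero_of_notMem_tsupport hx
        have : ∀ i ∈ Finset.univ, (f * oR (𝕜 := 𝕜) (χ i)) x = 0 := by
          intro i _
          show f x * _ = 0
          rw [h0, zero_mul]
        rw [Finset.sum_eq_zero this, h0]
    have hterm : ∀ i, T (f * oR (χ i)) y = 0 := by
      intro i
      apply hU (e.symm i).1.1 (e.symm i).1.2 _ (hcsMul f _ (hcsoR i))
      have hs1 : tsupport ⇑(f * oR (𝕜 := 𝕜) (χ i)) ⊆ tsupport ⇑(χ i) := by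
        apply closure_minimal _ (isClosed_tsupport _)
        intro x hx
        have : (χ i) x ≠ 0 := by
          intro h
          apply hx
          show f x * ((χ i x : ℝ) : 𝕜) = 0
          rw [h]
          simp
        exact subset_tsupport _ this
      exact hs1.trans (hχsupp i)
    rw [key, hTsum _ (fun i => hcsMul f _ (hcsoR i))]
    rw [ContinuousMap.coe_sum, Finset.sum_apply]
    exact Finset.sum_eq_zero (fun i _ => hterm i)
  -- existence of support points
  have hGood : ∀ y : Y, ∃ x : X, ∀ U : Set X, x ∈ U → IsOpen U →
      ∃ h : C(X, 𝕜), HasCompactSupport ⇑h ∧ tsupport ⇑h ⊆ U ∧ T h y ≠ 0 := by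
    intro y
    obtain ⟨g₀, hg₀cs, hg₀1, -, -⟩ := ury (Z := Y) 𝕜 (isCompact_singleton : IsCompact {y})
      isOpen_univ (Set.subset_univ _)
    obtain ⟨f₀, hf₀, hTf₀⟩ := hTbij.surjOn (show g₀ ∈ {g : C(Y, 𝕜) | HasCompactSupport ⇑g}
      from hg₀cs)
    by_contra hno
    push_neg at hno
    have : T f₀ y = 0 := by
      apply PART f₀ hf₀ y
      intro z hz
      obtain ⟨U, hzU, hUo, hh⟩ := hno z
      exact ⟨U, hzU, hUo, hh⟩
    rw [hTf₀] at this
    have : (1 : 𝕜) = 0 := by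
      have h1 : g₀ y = 1 := hg₀1 rfl
      rw [← h1, this]
    exact one_ne_zero this
  have hGuniq : ∀ (y : Y) (x₁ x₂ : X),
      (∀ U : Set X, x₁ ∈ U → IsOpen U →
        ∃ h : C(X, 𝕜), HasCompactSupport ⇑h ∧ tsupport ⇑h ⊆ U ∧ T h y ≠ 0) →
      (∀ U : Set X, x₂ ∈ U → IsOpen U →
        ∃ h : C(X, 𝕜), HasCompactSupport ⇑h ∧ tsupport ⇑h ⊆ U ∧ T h y ≠ 0) →
      x₁ = x₂ := by
    intro y x₁ x₂ hx₁ hx₂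
    by_contra hne
    obtain ⟨U, V, hUo, hVo, hxU, hxV, hUV⟩ := t2_separation hne
    obtain ⟨h₁, hh₁cs, hh₁s, hh₁⟩ := hx₁ U hxU hUo
    obtain ⟨h₂, hh₂cs, hh₂s, hh₂⟩ := hx₂ V hxV hVo
    have hd : ∀ x, h₁ x = 0 ∨ h₂ x = 0 := by
      intro x
      by_cases h : h₁ x = 0
      · exact Or.inl h
      · right
        by_contra h'
        have m1 : x ∈ U := hh₁s (subset_tsupport _ h)
        have m2 : x ∈ V := hh₂s (subset_tsupport _ h')
        exact (Set.disjoint_left.mp hUV m1) m2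
    rcases hdisj h₁ h₂ hh₁cs hh₂cs hd y with h | h
    · exact hh₁ h
    · exact hh₂ h
  -- the map φ₀
  set φ₀ : Y → X := fun y => (hGood y).choose with hφ₀def
  have hφ₀ : ∀ (y : Y) (U : Set X), φ₀ y ∈ U → IsOpen U →
      ∃ h : C(X, 𝕜), HasCompactSupport ⇑h ∧ tsupport ⇑h ⊆ U ∧ T h y ≠ 0 :=
    fun y => (hGood y).choose_spec
  have hφ₀uniq : ∀ (y : Y) (x : X),
      (∀ U : Set X, x ∈ U → IsOpen U →
        ∃ h : C(X, 𝕜), HasCompactSupport ⇑h ∧ tsupport ⇑h ⊆ U ∧ T h y ≠ 0) →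
      x = φ₀ y := fun y x hx => hGuniq y x (φ₀ y) hx (hφ₀ y)
  -- locality
  have hlocal : ∀ (f : C(X, 𝕜)), HasCompactSupport ⇑f → ∀ (y : Y) (U : Set X),
      IsOpen U → φ₀ y ∈ U → Set.EqOn ⇑f 0 U → T f y = 0 := by
    intro f hf y U hUo hyU hfU
    apply PART f hf y
    intro z hz
    have hker : tsupport ⇑f ⊆ Uᶜ := by
      apply closure_minimal _ (hUo.isClosed_compl)
      intro x hx hxU
      exact hx (hfU hxU)
    have hzne : ¬(∀ V : Set X, z ∈ V → IsOpen V →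
        ∃ h : C(X, 𝕜), HasCompactSupport ⇑h ∧ tsupport ⇑h ⊆ V ∧ T h y ≠ 0) := by
      intro hcon
      have : z = φ₀ y := hφ₀uniq y z hcon
      rw [this] at hz
      exact (hker hz) hyU
    push_neg at hzne
    obtain ⟨V, hzV, hVo, hV⟩ := hzne
    exact ⟨V, hzV, hVo, hV⟩
  -- the key vanishing property
  have hvanish : ∀ (f : C(X, 𝕜)), HasCompactSupport ⇑f → ∀ y : Y,
      f (φ₀ y) = 0 → T f y = 0 := by
    intro f hf y hf0
    obtain ⟨K, hKc, hKmem⟩ := exists_compact_mem_nhds (φ₀ y)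
    obtain ⟨u, hucs, hu1, -, hureal⟩ := ury 𝕜 hKc isOpen_univ (Set.subset_univ _)
    set C := ‖T u y‖ with hC
    have hCnn : 0 ≤ C := norm_nonneg _
    by_contra hTf0
    have hpos : 0 < ‖T f y‖ := norm_pos_iff.mpr hTf0
    set ε := ‖T f y‖ / (4 * C + 1) with hε
    have hεpos : 0 < ε := div_pos hpos (by linarith)
    set V := interior K ∩ (fun x => ‖f x‖) ⁻¹' Set.Iio ε with hV
    have hVo : IsOpen V :=
      isOpen_interior.inter (isOpen_Iio.preimage f.continuous.norm)
    have hx₀V : φ₀ y ∈ V := by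
      refine ⟨mem_interior_iff_mem_nhds.mpr hKmem, ?_⟩
      simp only [Set.mem_preimage, Set.mem_Iio, hf0, norm_zero]
      exact hεpos
    obtain ⟨K', hK'c, hK'int, hK'V⟩ := exists_compact_subset hVo hx₀V
    obtain ⟨v, hvcs, hv1, hvsup, hvreal⟩ := ury 𝕜 hK'c hVo hK'V
    set g := f * v with hgdef
    have hgcs : HasCompactSupport ⇑g := hcsMul f v hvcs
    have hsplit : T f y = T g y := by
      have hd : T (f - g) y = 0 := by
        apply hlocal _ (hcsSub f g hf hgcs) y (interior K') isOpen_interior hK'int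
        intro x hx
        have hvx : v x = 1 := by
          have := hv1 (interior_subset hx)
          simpa using this
        show f x - f x * v x = 0
        rw [hvx, mul_one, sub_self]
      rw [hTsub f g hf hgcs] at hd
      have h' : T f y - T g y = 0 := by simpa using hd
      have := sub_eq_zero.mp h'
      exact this
    have hgprop : ∀ x : X, g x ≠ 0 → x ∈ K ∧ ‖g x‖ ≤ ε := by
      intro x hgx
      have hvx : v x ≠ 0 := by
        intro h
        apply hgx
        show f x * v x = 0
        rw [h, mul_zero]
      have hxV : x ∈ V := hvsup (subset_tsupport _ hvx)
      refine ⟨interior_subset hxV.1, ?_⟩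
      have h1 : ‖f x‖ < ε := hxV.2
      have h2 : ‖v x‖ ≤ 1 := by
        obtain ⟨r, hr0, hr1, hvr⟩ := hvreal x
        rw [hvr, RCLike.norm_ofReal, abs_of_nonneg hr0]
        exact hr1
      show ‖f x * v x‖ ≤ ε
      rw [norm_mul]
      calc ‖f x‖ * ‖v x‖ ≤ ε * 1 :=
            mul_le_mul h1.le h2 (norm_nonneg _) hεpos.le
        _ = ε := mul_one ε
    -- bound for dominated nonneg pieces
    have hbound : ∀ p : C(X, ℝ), HasCompactSupport ⇑p →
        (∀ x, 0 ≤ p x ∧ p x ≤ ‖g x‖) → ‖T (oR p) y‖ ≤ ε * C := by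
      intro p hpcs hp
      have hdomhyp : ∀ x, ∃ r s : ℝ, 0 ≤ s ∧ s ≤ r ∧
          (((ε : ℝ) : 𝕜) • u) x = ((r : ℝ) : 𝕜) ∧ (oR (𝕜 := 𝕜) p) x = ((s : ℝ) : 𝕜) := by
        intro x
        obtain ⟨r, hr0, hr1, hur⟩ := hureal x
        refine ⟨ε * r, p x, (hp x).1, ?_, ?_, rfl⟩
        · by_cases hgx : g x = 0
          · have : p x ≤ 0 := by
              have := (hp x).2
              rw [hgx, norm_zero] at this
              exact this
            have hεr : 0 ≤ ε * r := mul_nonneg hεpos.le hr0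
            linarith
          · obtain ⟨hxK, hgle⟩ := hgprop x hgx
            have hu1x : u x = 1 := by
              have := hu1 hxK
              simpa using this
            have hr : r = 1 := by
              have : ((r : ℝ) : 𝕜) = ((1 : ℝ) : 𝕜) := by
                rw [← hur, hu1x]
                simp
              exact_mod_cast this
            rw [hr, mul_one]
            exact le_trans (hp x).2 hgle
        · show ((ε : ℝ) : 𝕜) • u x = ((ε * r : ℝ) : 𝕜)
          rw [hur, smul_eq_mul, ← RCLike.ofReal_mul]
      have hres := hdom (((ε : ℝ) : 𝕜) • u) (oR p) (hcsSmul _ u hucs) (oR_cs hpcs) hdomhyp y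
      rw [hTsmul _ u hucs] at hres
      have : ‖(((ε : ℝ) : 𝕜) • T u) y‖ = ε * C := by
        show ‖((ε : ℝ) : 𝕜) • T u y‖ = ε * C
        rw [norm_smul, RCLike.norm_ofReal, abs_of_nonneg hεpos.le, hC]
      rw [this] at hres
      exact hres
    -- the four pieces
    set p₁ : C(X, ℝ) := ⟨fun x => max (RCLike.re (g x)) 0,
      (RCLike.continuous_re.comp g.continuous).max continuous_const⟩ with hp₁
    set p₂ : C(X, ℝ) := ⟨fun x => max (-(RCLike.re (g x))) 0,
      ((RCLike.continuous_re.comp g.continuous).neg).max continuous_const⟩ with hp₂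
    set p₃ : C(X, ℝ) := ⟨fun x => max (RCLike.im (g x)) 0,
      (RCLike.continuous_im.comp g.continuous).max continuous_const⟩ with hp₃
    set p₄ : C(X, ℝ) := ⟨fun x => max (-(RCLike.im (g x))) 0,
      ((RCLike.continuous_im.comp g.continuous).neg).max continuous_const⟩ with hp₄
    have hsupp : ∀ p : C(X, ℝ), (∀ x, g x = 0 → p x = 0) → HasCompactSupport ⇑p := by
      intro p hp
      apply hgcs.mono
      intro x hx
      simp only [Function.mem_support] at hx ⊢
      exact fun h => hx (hp x h)
    have hp₁cs : HasCompactSupport ⇑p₁ := hsupp p₁ (by intro x h; simp [hp₁, h])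
    have hp₂cs : HasCompactSupport ⇑p₂ := hsupp p₂ (by intro x h; simp [hp₂, h])
    have hp₃cs : HasCompactSupport ⇑p₃ := hsupp p₃ (by intro x h; simp [hp₃, h])
    have hp₄cs : HasCompactSupport ⇑p₄ := hsupp p₄ (by intro x h; simp [hp₄, h])
    have hb₁ : ‖T (oR p₁) y‖ ≤ ε * C := by
      apply hbound p₁ hp₁cs
      intro x
      refine ⟨le_max_right _ _, max_le ?_ (norm_nonneg _)⟩
      exact le_trans (le_abs_self _) (RCLike.abs_re_le_norm _)
    have hb₂ : ‖T (oR p₂) y‖ ≤ ε * C := by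
      apply hbound p₂ hp₂cs
      intro x
      refine ⟨le_max_right _ _, max_le ?_ (norm_nonneg _)⟩
      exact le_trans (neg_le_abs _) (RCLike.abs_re_le_norm _)
    have hb₃ : ‖T (oR p₃) y‖ ≤ ε * C := by
      apply hbound p₃ hp₃cs
      intro x
      refine ⟨le_max_right _ _, max_le ?_ (norm_nonneg _)⟩
      exact le_trans (le_abs_self _) (RCLike.abs_im_le_norm _)
    have hb₄ : ‖T (oR p₄) y‖ ≤ ε * C := by
      apply hbound p₄ hp₄cs
      intro x
      refine ⟨le_max_right _ _, max_le ?_ (norm_nonneg _)⟩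
      exact le_trans (neg_le_abs _) (RCLike.abs_im_le_norm _)
    -- decomposition
    have hq₁cs : HasCompactSupport ⇑(oR (𝕜 := 𝕜) p₁) := oR_cs hp₁cs
    have hq₂cs : HasCompactSupport ⇑(oR (𝕜 := 𝕜) p₂) := oR_cs hp₂cs
    have hq₃cs : HasCompactSupport ⇑(oR (𝕜 := 𝕜) p₃) := oR_cs hp₃cs
    have hq₄cs : HasCompactSupport ⇑(oR (𝕜 := 𝕜) p₄) := oR_cs hp₄cs
    set q₁ : C(X, 𝕜) := oR p₁ with hq₁
    set q₂ : C(X, 𝕜) := oR p₂ with hq₂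
    set q₃ : C(X, 𝕜) := oR p₃ with hq₃
    set q₄ : C(X, 𝕜) := oR p₄ with hq₄
    have hdecomp : g = (q₁ - q₂) + (RCLike.I : 𝕜) • (q₃ - q₄) := by
      ext x
      show g x = ((p₁ x : ℝ) : 𝕜) - ((p₂ x : ℝ) : 𝕜)
        + RCLike.I * (((p₃ x : ℝ) : 𝕜) - ((p₄ x : ℝ) : 𝕜))
      rw [← RCLike.ofReal_sub, ← RCLike.ofReal_sub]
      have e1 : p₁ x - p₂ x = RCLike.re (g x) := by
        simp [hp₁, hp₂, max_zero_sub_max_neg_zero_eq_self]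
      have e2 : p₃ x - p₄ x = RCLike.im (g x) := by
        simp [hp₃, hp₄, max_zero_sub_max_neg_zero_eq_self]
      rw [e1, e2, mul_comm]
      exact (RCLike.re_add_im (g x)).symm
    have hcs34 : HasCompactSupport ⇑(q₃ - q₄) := hcsSub _ _ hq₃cs hq₄cs
    have hTgy : T g y = (T q₁ y - T q₂ y) + RCLike.I * (T q₃ y - T q₄ y) := by
      rw [hdecomp, hTadd _ _ (hcsSub _ _ hq₁cs hq₂cs) (hcsSmul _ _ hcs34),
        hTsub _ _ hq₁cs hq₂cs, hTsmul _ _ hcs34, hTsub _ _ hq₃cs hq₄cs]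
      simp [smul_eq_mul]
    have hfinal : ‖T f y‖ ≤ 4 * (ε * C) := by
      rw [hsplit, hTgy]
      have t1 : ‖T q₁ y - T q₂ y‖ ≤ ε * C + ε * C :=
        le_trans (norm_sub_le _ _) (add_le_add hb₁ hb₂)
      have t2 : ‖T q₃ y - T q₄ y‖ ≤ ε * C + ε * C :=
        le_trans (norm_sub_le _ _) (add_le_add hb₃ hb₄)
      calc ‖T q₁ y - T q₂ y + RCLike.I * (T q₃ y - T q₄ y)‖
          ≤ ‖T q₁ y - T q₂ y‖ + ‖(RCLike.I : 𝕜)‖ * ‖T q₃ y - T q₄ y‖ := by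
            refine le_trans (norm_add_le _ _) ?_
            rw [norm_mul]
        _ ≤ (ε * C + ε * C) + 1 * (ε * C + ε * C) := by
            refine add_le_add t1 ?_
            exact mul_le_mul sc_normI t2 (norm_nonneg _) zero_le_one
        _ = 4 * (ε * C) := by ring
    have hεeq : ε * (4 * C + 1) = ‖T f y‖ := by
      rw [hε]
      field_simp
    nlinarith [hfinal, hεeq, hεpos, hCnn]
  -- the weight and the formula
  have hUchoice : ∀ y : Y, ∃ u : C(X, 𝕜), HasCompactSupport ⇑u ∧
      ∃ W : Set X, IsOpen W ∧ φ₀ y ∈ W ∧ Set.EqOn ⇑u 1 W := by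
    intro y
    obtain ⟨K, hKc, hKmem⟩ := exists_compact_mem_nhds (φ₀ y)
    obtain ⟨u, hucs, hu1, -, -⟩ := ury 𝕜 hKc isOpen_univ (Set.subset_univ _)
    exact ⟨u, hucs, interior K, isOpen_interior, mem_interior_iff_mem_nhds.mpr hKmem,
      fun x hx => hu1 (interior_subset hx)⟩
  choose uu huucs huuW using hUchoice
  set P : Y → 𝕜 := fun y => T (uu y) y with hPdef
  have hform : ∀ f : C(X, 𝕜), HasCompactSupport ⇑f → ∀ y, T f y = P y * f (φ₀ y) := by
    intro f hf y
    obtain ⟨W, hWo, hWmem, hW1⟩ := huuW y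
    have hu1 : uu y (φ₀ y) = 1 := by
      have := hW1 hWmem
      simpa using this
    have hcs' : HasCompactSupport ⇑(f (φ₀ y) • uu y) := hcsSmul _ _ (huucs y)
    have h0 : T (f - f (φ₀ y) • uu y) y = 0 := by
      apply hvanish _ (hcsSub f _ hf hcs') y
      show f (φ₀ y) - f (φ₀ y) • uu y (φ₀ y) = 0
      rw [hu1, smul_eq_mul, mul_one, sub_self]
    rw [hTsub _ _ hf hcs', hTsmul _ _ (huucs y)] at h0
    have h1 : T f y - f (φ₀ y) * T (uu y) y = 0 := by simpa [smul_eq_mul] using h0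
    have := sub_eq_zero.mp h1
    rw [this, hPdef, mul_comm]
  have hPne : ∀ y, P y ≠ 0 := by
    intro y
    obtain ⟨g₀, hg₀cs, hg₀1, -, -⟩ := ury (Z := Y) 𝕜 (isCompact_singleton : IsCompact {y})
      isOpen_univ (Set.subset_univ _)
    obtain ⟨f₀, hf₀, hTf₀⟩ := hTbij.surjOn (show g₀ ∈ {g : C(Y, 𝕜) | HasCompactSupport ⇑g}
      from hg₀cs)
    have h1 : g₀ y = 1 := by
      have := hg₀1 (Set.mem_singleton y)
      simpa using this
    have h2 : T f₀ y = P y * f₀ (φ₀ y) := hform f₀ hf₀ y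
    rw [hTf₀, h1] at h2
    intro h
    rw [h, zero_mul] at h2
    exact one_ne_zero h2
  have hφcont : Continuous φ₀ := by
    rw [continuous_iff_continuousAt]
    intro y₀
    unfold ContinuousAt
    rw [Filter.tendsto_def]
    intro s hs
    obtain ⟨U, hUs, hUo, hxU⟩ := mem_nhds_iff.mp hs
    obtain ⟨fx, hfxcs, hfx1, hfxsup, -⟩ := ury 𝕜 (isCompact_singleton : IsCompact {φ₀ y₀})
      hUo (by simpa using hxU)
    have hfx1' : fx (φ₀ y₀) = 1 := by
      have := hfx1 (Set.mem_singleton _)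
      simpa using this
    have hne : T fx y₀ ≠ 0 := by
      rw [hform fx hfxcs y₀, hfx1', mul_one]
      exact hPne y₀
    have hD : IsOpen {y | T fx y ≠ 0} := by
      have : {y | T fx y ≠ 0} = (⇑(T fx)) ⁻¹' ({0}ᶜ) := rfl
      rw [this]
      exact (isOpen_compl_singleton).preimage (T fx).continuous
    refine Filter.mem_of_superset (hD.mem_nhds hne) ?_
    intro y hy
    have h1 : fx (φ₀ y) ≠ 0 := by
      intro h
      apply hy
      rw [hform fx hfxcs y, h, mul_zero]
    exact hUs (hfxsup (subset_tsupport _ h1))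
  have hPcont : Continuous P := by
    rw [continuous_iff_continuousAt]
    intro y₀
    obtain ⟨W, hWo, hWmem, hW1⟩ := huuW y₀
    have hev : (⇑(T (uu y₀))) =ᶠ[nhds y₀] P := by
      have hWnhds : φ₀ ⁻¹' W ∈ nhds y₀ :=
        hφcont.continuousAt.preimage_mem_nhds (hWo.mem_nhds hWmem)
      filter_upwards [hWnhds] with y hy
      rw [hform (uu y₀) (huucs y₀) y]
      have : uu y₀ (φ₀ y) = 1 := by
        have := hW1 hy
        simpa using this
      rw [this, mul_one]
    exact ((T (uu y₀)).continuous.continuousAt).congr hev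
  exact ⟨φ₀, P, hφcont, hPcont, hPne, hform⟩






end

set_option maxHeartbeats 1000000 in
/-- A linear bijection `T : C_c(X,𝕂) → C_c(Y,𝕂)` isometric for the `L¹`-norms of fully
supported regular Borel measures `μ_X`, `μ_Y` is a weighted composition operator
`Tf(y) = P(y)·f(φ(y))`, where `|P ∘ φ⁻¹|` is a continuous density of `μ_X` with respect
to the pushforward `φ_*μ_Y`. -/
theorem stmt_18 {𝕜 X Y : Type*} [RCLike 𝕜]
    [TopologicalSpace X] [LocallyCompactSpace X] [T2Space X]
    [MeasurableSpace X] [BorelSpace X]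
    [TopologicalSpace Y] [LocallyCompactSpace Y] [T2Space Y]
    [MeasurableSpace Y] [BorelSpace Y]
    (μX : Measure X) (μY : Measure Y) [μX.Regular] [μY.Regular]
    (hXfull : ∀ U : Set X, IsOpen U → U.Nonempty → 0 < μX U)
    (hYfull : ∀ U : Set Y, IsOpen U → U.Nonempty → 0 < μY U)
    (T : C(X, 𝕜) → C(Y, 𝕜))
    (hTbij : Set.BijOn T {f | HasCompactSupport ⇑f} {g | HasCompactSupport ⇑g})
    (hTadd : ∀ f g : C(X, 𝕜), HasCompactSupport ⇑f → HasCompactSupport ⇑g →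
      T (f + g) = T f + T g)
    (hTsmul : ∀ (c : 𝕜), ∀ f : C(X, 𝕜), HasCompactSupport ⇑f → T (c • f) = c • T f)
    (hTiso : ∀ f : C(X, 𝕜), HasCompactSupport ⇑f →
      ∫ y, ‖T f y‖ ∂μY = ∫ x, ‖f x‖ ∂μX) :
    ∃ (φ : Y ≃ₜ X) (P : Y → 𝕜), Continuous P ∧ (∀ y, P y ≠ 0) ∧
      (∀ f : C(X, 𝕜), HasCompactSupport ⇑f → ∀ y, T f y = P y * f (φ y)) ∧
      (∀ f : C(X, 𝕜), HasCompactSupport ⇑f →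
        ∫ x, ‖P (φ.symm x)‖ * ‖f x‖ ∂(μY.map φ) = ∫ x, ‖f x‖ ∂μX) := by
  classical
  -- compact support helpers on Y
  have hcsAddY : ∀ a b : C(Y, 𝕜), HasCompactSupport ⇑a → HasCompactSupport ⇑b →
      HasCompactSupport ⇑(a + b) := by
    intro a b ha hb; rw [ContinuousMap.coe_add]; exact ha.add hb
  have hcsSmulX : ∀ (c : 𝕜) (a : C(X, 𝕜)), HasCompactSupport ⇑a →
      HasCompactSupport ⇑(c • a) := by
    intro c a ha
    apply ha.mono
    intro x hx
    simp only [Function.mem_support, ContinuousMap.coe_smul, Pi.smul_apply,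
      smul_eq_mul] at hx ⊢
    exact fun h => hx (by rw [h, mul_zero])
  have hcsSmulY : ∀ (c : 𝕜) (a : C(Y, 𝕜)), HasCompactSupport ⇑a →
      HasCompactSupport ⇑(c • a) := by
    intro c a ha
    apply ha.mono
    intro x hx
    simp only [Function.mem_support, ContinuousMap.coe_smul, Pi.smul_apply,
      smul_eq_mul] at hx ⊢
    exact fun h => hx (by rw [h, mul_zero])
  have hcsAddX : ∀ a b : C(X, 𝕜), HasCompactSupport ⇑a → HasCompactSupport ⇑b →
      HasCompactSupport ⇑(a + b) := by
    intro a b ha hb; rw [ContinuousMap.coe_add]; exact ha.add hb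
  -- the inverse map
  have hSex : ∀ g : C(Y, 𝕜), HasCompactSupport ⇑g →
      ∃ f : C(X, 𝕜), HasCompactSupport ⇑f ∧ T f = g := by
    intro g hg
    obtain ⟨f, hf, hTf⟩ := hTbij.surjOn hg
    exact ⟨f, hf, hTf⟩
  choose S₀ hS₀cs hS₀T using hSex
  set S : C(Y, 𝕜) → C(X, 𝕜) := fun g =>
    if h : HasCompactSupport ⇑g then S₀ g h else 0 with hSdef
  have hScs : ∀ g : C(Y, 𝕜), HasCompactSupport ⇑g → HasCompactSupport ⇑(S g) ∧ T (S g) = g := by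
    intro g hg
    simp only [hSdef, dif_pos hg]
    exact ⟨hS₀cs g hg, hS₀T g hg⟩
  have hST : ∀ f : C(X, 𝕜), HasCompactSupport ⇑f → S (T f) = f := by
    intro f hf
    have hTf : HasCompactSupport ⇑(T f) := hTbij.mapsTo hf
    exact hTbij.injOn (hScs _ hTf).1 hf (hScs _ hTf).2
  have hSbij : Set.BijOn S {g : C(Y, 𝕜) | HasCompactSupport ⇑g}
      {f : C(X, 𝕜) | HasCompactSupport ⇑f} := by
    refine ⟨fun g hg => (hScs g hg).1, ?_, ?_⟩
    · intro g₁ h₁ g₂ h₂ he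
      rw [← (hScs g₁ h₁).2, ← (hScs g₂ h₂).2, he]
    · intro f hf
      exact ⟨T f, hTbij.mapsTo hf, hST f hf⟩
  have hSadd : ∀ g₁ g₂ : C(Y, 𝕜), HasCompactSupport ⇑g₁ → HasCompactSupport ⇑g₂ →
      S (g₁ + g₂) = S g₁ + S g₂ := by
    intro g₁ g₂ h₁ h₂
    have h12 : HasCompactSupport ⇑(g₁ + g₂) := hcsAddY g₁ g₂ h₁ h₂
    apply hTbij.injOn (hScs _ h12).1 (hcsAddX _ _ (hScs g₁ h₁).1 (hScs g₂ h₂).1)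
    rw [(hScs _ h12).2, hTadd _ _ (hScs g₁ h₁).1 (hScs g₂ h₂).1,
      (hScs g₁ h₁).2, (hScs g₂ h₂).2]
  have hSsmul : ∀ (c : 𝕜), ∀ g : C(Y, 𝕜), HasCompactSupport ⇑g → S (c • g) = c • S g := by
    intro c g hg
    have hcg : HasCompactSupport ⇑(c • g) := hcsSmulY c g hg
    apply hTbij.injOn (hScs _ hcg).1 (hcsSmulX c _ (hScs g hg).1)
    rw [(hScs _ hcg).2, hTsmul c _ (hScs g hg).1, (hScs g hg).2]
  have hSiso : ∀ g : C(Y, 𝕜), HasCompactSupport ⇑g →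
      ∫ x, ‖S g x‖ ∂μX = ∫ y, ‖g y‖ ∂μY := by
    intro g hg
    rw [← hTiso (S g) (hScs g hg).1, (hScs g hg).2]
  -- apply the core construction in both directions
  obtain ⟨φ, P, hφc, hPc, hPne, hform⟩ := core_thm μX μY hYfull T hTbij hTadd hTsmul hTiso
  obtain ⟨ψ, Q, hψc, hQc, hQne, hgform⟩ := core_thm μY μX hXfull S hSbij hSadd hSsmul hSiso
  -- mutual inverses
  have hφψ : ∀ x, φ (ψ x) = x := by
    intro x
    by_contra hne
    obtain ⟨u, hucs, hu1, husup, -⟩ := ury 𝕜 (isCompact_singleton : IsCompact {x})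
      (isOpen_compl_singleton (x := φ (ψ x))) (by simpa using hne)
    have hux : u x = 1 := by
      have := hu1 (Set.mem_singleton x)
      simpa using this
    have hu0 : u (φ (ψ x)) = 0 := by
      by_contra h
      have := husup (subset_tsupport _ h)
      simp at this
    have e1 : u x = Q x * (T u (ψ x)) := by
      conv_lhs => rw [← hST u hucs]
      exact hgform (T u) (hTbij.mapsTo hucs) x
    rw [hform u hucs (ψ x), hu0, mul_zero, mul_zero, hux] at e1
    exact one_ne_zero e1
  have hψφ : ∀ y, ψ (φ y) = y := by
    intro y
    by_contra hne
    obtain ⟨w, hwcs, hw1, hwsup, -⟩ := ury (Z := Y) 𝕜 (isCompact_singleton : IsCompact {y})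
      (isOpen_compl_singleton (x := ψ (φ y))) (by simpa using hne)
    have hwy : w y = 1 := by
      have := hw1 (Set.mem_singleton y)
      simpa using this
    have hw0 : w (ψ (φ y)) = 0 := by
      by_contra h
      have := hwsup (subset_tsupport _ h)
      simp at this
    have e1 : w y = P y * (S w (φ y)) := by
      conv_lhs => rw [← (hScs w hwcs).2]
      exact hform (S w) (hScs w hwcs).1 y
    rw [hgform w hwcs (φ y), hw0, mul_zero, mul_zero, hwy] at e1
    exact one_ne_zero e1
  let Φ : Y ≃ₜ X :=
    { toFun := φ
      invFun := ψ
      left_inv := hψφ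
      right_inv := hφψ
      continuous_toFun := hφc
      continuous_invFun := hψc }
  have hΦcoe : ∀ y, Φ y = φ y := fun _ => rfl
  have hΦsymm : ∀ x, Φ.symm x = ψ x := fun _ => rfl
  refine ⟨Φ, P, hPc, hPne, fun f hf y => hform f hf y, ?_⟩
  intro f hf
  have hmeas : AEMeasurable (⇑Φ) μY := Φ.continuous.measurable.aemeasurable
  have hsm : AEStronglyMeasurable (fun x => ‖P (Φ.symm x)‖ * ‖f x‖) (μY.map ⇑Φ) :=
    (((hPc.comp Φ.symm.continuous).norm).mul f.continuous.norm).aestronglyMeasurable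
  rw [MeasureTheory.integral_map hmeas hsm]
  rw [← hTiso f hf]
  congr 1
  funext y
  rw [show Φ.symm (Φ y) = y from Φ.symm_apply_apply y]
  rw [hform f hf y, norm_mul]
  rfl
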